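/- Sufficient mass at b̲ in case IV: let μ be a probability measure on (0,∞) with positive density, mean S_0 ∈ (b̲,b̄), and suppose b̄ < ρ₋(0), b̲ > ρ₊(∞) and ρ₊(ρ₋(0)) < ρ₋(ρ₊(∞)). Then (S_0−b̲)/(b̄−b̲) − μ((ρ₋(0),∞)) ≥ μ((ρ₊(∞), ρ₊(ρ₋(0)))). -/

import Mathlib

open MeasureTheory Set

noncomputable def bary (μ : Measure ℝ) (Γ : Set ℝ) : ℝ :=
  (∫ u in Γ, u ∂μ) / (μ Γ).toReal

lemma bary_eq_mul {μ : Measure ℝ} {S : Set ℝ} {c : ℝ} (h : bary μ S = c) (hc : c ≠ 0) :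
    ∫ u in S, u ∂μ = c * (μ S).toReal := by
  by_cases h0 : (μ S).toReal = 0
  · rw [bary, h0, div_zero] at h
    exact absurd h.symm hc
  · rw [bary, div_eq_iff h0] at h
    exact h

lemma setIntegral_le_const {μ : Measure ℝ} {S : Set ℝ} {c : ℝ} (hS : MeasurableSet S)
    (hμS : μ S ≠ ⊤) (hb : ∀ x ∈ S, x ≤ c) (hint : IntegrableOn (fun x : ℝ => x) S μ) :
    ∫ u in S, u ∂μ ≤ c * (μ S).toReal := by
  rw [mul_comm, ← smul_eq_mul, ← measureReal_def, ← setIntegral_const c]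
  exact setIntegral_mono_on hint (integrableOn_const hμS) hS hb

/-- Sufficient mass at `b̲` in case IV of Theorem 3.2:
`(S₀−b̲)/(b̄−b̲) − μ((ρ₋(0),∞)) ≥ μ((ρ₊(∞), ρ₊(ρ₋(0))))`. -/
theorem stmt14 (μ : Measure ℝ) [IsProbabilityMeasure μ]
    (hsupp : μ (Set.Iic 0) = 0)
    (hdens : ∀ a b : ℝ, 0 ≤ a → a < b → 0 < μ (Set.Ioo a b))
    (hint : Integrable id μ)
    (S₀ lb ub r₀ ρpInf ρpr₀ ρmρpInf : ℝ) (hmean : ∫ u, u ∂μ = S₀)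
    (h0 : 0 < lb) (h1 : lb < S₀) (h2 : S₀ < ub)
    (hr₀ : bary μ (Set.Icc 0 r₀) = lb)
    (hρpInf : 0 ≤ ρpInf ∧ bary μ (Set.Ici ρpInf) = ub)
    (hρpr₀ : 0 ≤ ρpr₀ ∧ ρpr₀ ≤ r₀ ∧ bary μ (Set.Icc ρpr₀ r₀) = ub)
    (hρmρpInf : ρpInf ≤ ρmρpInf ∧ bary μ (Set.Icc ρpInf ρmρpInf) = lb)
    (hc1 : ub < r₀) (hc2 : ρpInf < lb) (hc3 : ρpr₀ < ρmρpInf) :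
    (μ (Set.Ioo ρpInf ρpr₀)).toReal
      ≤ (S₀ - lb) / (ub - lb) - (μ (Set.Ioi r₀)).toReal := by
  obtain ⟨hρpInf0, hbB⟩ := hρpInf
  obtain ⟨hρpr₀0, hρpr₀r₀, hbC⟩ := hρpr₀
  obtain ⟨hle, hbD⟩ := hρmρpInf
  have hub0 : (0:ℝ) < ub := by linarith
  have hr₀0 : (0:ℝ) < r₀ := by linarith
  have hfin : ∀ S : Set ℝ, μ S ≠ ⊤ := fun S => measure_ne_top μ S
  have hiOn : ∀ S : Set ℝ, IntegrableOn (fun x : ℝ => x) S μ := fun S => hint.integrableOn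
  -- barycentre identities
  have iA : ∫ u in Icc 0 r₀, u ∂μ = lb * (μ (Icc 0 r₀)).toReal := bary_eq_mul hr₀ h0.ne'
  have iB : ∫ u in Ici ρpInf, u ∂μ = ub * (μ (Ici ρpInf)).toReal := bary_eq_mul hbB hub0.ne'
  have iC : ∫ u in Icc ρpr₀ r₀, u ∂μ = ub * (μ (Icc ρpr₀ r₀)).toReal := bary_eq_mul hbC hub0.ne'
  have iD : ∫ u in Icc ρpInf ρmρpInf, u ∂μ = lb * (μ (Icc ρpInf ρmρpInf)).toReal :=
    bary_eq_mul hbD h0.ne'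
  -- helpers for additivity
  have haddμ : ∀ (A B : Set ℝ), Disjoint A B → MeasurableSet B →
      (μ (A ∪ B)).toReal = (μ A).toReal + (μ B).toReal := by
    intro A B hd hB
    rw [measure_union hd hB, ENNReal.toReal_add (hfin A) (hfin B)]
  have haddI : ∀ (A B : Set ℝ), Disjoint A B → MeasurableSet B →
      ∫ u in A ∪ B, u ∂μ = (∫ u in A, u ∂μ) + ∫ u in B, u ∂μ := by
    intro A B hd hB
    exact setIntegral_union hd hB (hiOn A) (hiOn B)
  have hdisj1 : ∀ a b : ℝ, Disjoint (Ico a b) (Ici b) := by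
    intro a b
    rw [Set.disjoint_left]
    rintro x ⟨_, h⟩ h'
    exact absurd h' (not_le.mpr h)
  have hdisj2 : ∀ a b : ℝ, Disjoint (Icc a b) (Ioi b) := by
    intro a b
    rw [Set.disjoint_left]
    rintro x ⟨_, h⟩ h'
    exact absurd h (not_le.mpr h')
  have hdisj3 : ∀ a b c : ℝ, Disjoint (Ico a b) (Icc b c) := by
    intro a b c
    rw [Set.disjoint_left]
    rintro x ⟨_, h⟩ ⟨h', _⟩
    exact absurd h' (not_le.mpr h)
  -- Step 1 : ρpInf ≤ ρpr₀
  have hIoiPos : 0 < (μ (Ioi r₀)).toReal := by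
    refine ENNReal.toReal_pos (fun hz => ?_) (hfin _)
    have := hdens r₀ (r₀ + 1) hr₀0.le (by linarith)
    have hsub : μ (Ioo r₀ (r₀ + 1)) ≤ μ (Ioi r₀) := measure_mono Set.Ioo_subset_Ioi_self
    rw [hz] at hsub
    exact absurd (le_antisymm hsub zero_le) (ne_of_gt this)
  have bIoi : r₀ * (μ (Ioi r₀)).toReal ≤ ∫ u in Ioi r₀, u ∂μ :=
    setIntegral_ge_of_const_le_real measurableSet_Ioi (hfin _)
      (fun x hx => le_of_lt hx) (hiOn _)
  have step1 : ρpInf ≤ ρpr₀ := by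
    by_contra hcon
    push_neg at hcon
    have d1 : Ico ρpr₀ ρpInf ∪ Ici ρpInf = Ici ρpr₀ := Ico_union_Ici_eq_Ici hcon.le
    have d2 : Icc ρpr₀ r₀ ∪ Ioi r₀ = Ici ρpr₀ := Icc_union_Ioi_eq_Ici hρpr₀r₀
    have e1 : ∫ u in Ici ρpr₀, u ∂μ
        = (∫ u in Ico ρpr₀ ρpInf, u ∂μ) + ∫ u in Ici ρpInf, u ∂μ := by
      rw [← d1, haddI _ _ (hdisj1 _ _) measurableSet_Ici]
    have e2 : ∫ u in Ici ρpr₀, u ∂μ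
        = (∫ u in Icc ρpr₀ r₀, u ∂μ) + ∫ u in Ioi r₀, u ∂μ := by
      rw [← d2, haddI _ _ (hdisj2 _ _) measurableSet_Ioi]
    have m1 : (μ (Ici ρpr₀)).toReal
        = (μ (Ico ρpr₀ ρpInf)).toReal + (μ (Ici ρpInf)).toReal := by
      rw [← d1, haddμ _ _ (hdisj1 _ _) measurableSet_Ici]
    have m2 : (μ (Ici ρpr₀)).toReal
        = (μ (Icc ρpr₀ r₀)).toReal + (μ (Ioi r₀)).toReal := by
      rw [← d2, haddμ _ _ (hdisj2 _ _) measurableSet_Ioi]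
    have b1 : ∫ u in Ico ρpr₀ ρpInf, u ∂μ ≤ ρpInf * (μ (Ico ρpr₀ ρpInf)).toReal :=
      setIntegral_le_const measurableSet_Ico (hfin _) (fun x hx => hx.2.le) (hiOn _)
    have b1' : ρpInf * (μ (Ico ρpr₀ ρpInf)).toReal ≤ ub * (μ (Ico ρpr₀ ρpInf)).toReal :=
      mul_le_mul_of_nonneg_right (by linarith) ENNReal.toReal_nonneg
    have b2' : ub * (μ (Ioi r₀)).toReal < r₀ * (μ (Ioi r₀)).toReal :=
      mul_lt_mul_of_pos_right hc1 hIoiPos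
    have m3 : ub * (μ (Ico ρpr₀ ρpInf)).toReal + ub * (μ (Ici ρpInf)).toReal
        = ub * (μ (Icc ρpr₀ r₀)).toReal + ub * (μ (Ioi r₀)).toReal := by
      linear_combination ub * (m2 - m1)
    linarith [e1, e2, iB, iC]
  -- Step 2 : key bound on the integral over E = Ico ρpInf ρpr₀
  have keyE : ∫ u in Ico ρpInf ρpr₀, u ∂μ ≤ lb * (μ (Ico ρpInf ρpr₀)).toReal := by
    rcases le_or_gt ρpr₀ lb with hcase | hcase
    · have b : ∫ u in Ico ρpInf ρpr₀, u ∂μ ≤ ρpr₀ * (μ (Ico ρpInf ρpr₀)).toReal :=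
        setIntegral_le_const measurableSet_Ico (hfin _) (fun x hx => hx.2.le) (hiOn _)
      have : ρpr₀ * (μ (Ico ρpInf ρpr₀)).toReal ≤ lb * (μ (Ico ρpInf ρpr₀)).toReal :=
        mul_le_mul_of_nonneg_right hcase ENNReal.toReal_nonneg
      linarith
    · have d : Ico ρpInf ρpr₀ ∪ Icc ρpr₀ ρmρpInf = Icc ρpInf ρmρpInf :=
        Ico_union_Icc_eq_Icc step1 hc3.le
      have e : ∫ u in Icc ρpInf ρmρpInf, u ∂μ
          = (∫ u in Ico ρpInf ρpr₀, u ∂μ) + ∫ u in Icc ρpr₀ ρmρpInf, u ∂μ := by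
        rw [← d, haddI _ _ (hdisj3 _ _ _) measurableSet_Icc]
      have m : (μ (Icc ρpInf ρmρpInf)).toReal
          = (μ (Ico ρpInf ρpr₀)).toReal + (μ (Icc ρpr₀ ρmρpInf)).toReal := by
        rw [← d, haddμ _ _ (hdisj3 _ _ _) measurableSet_Icc]
      have bF : ρpr₀ * (μ (Icc ρpr₀ ρmρpInf)).toReal ≤ ∫ u in Icc ρpr₀ ρmρpInf, u ∂μ :=
        setIntegral_ge_of_const_le_real measurableSet_Icc (hfin _) (fun x hx => hx.1) (hiOn _)
      have bF' : lb * (μ (Icc ρpr₀ ρmρpInf)).toReal ≤ ρpr₀ * (μ (Icc ρpr₀ ρmρpInf)).toReal :=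
        mul_le_mul_of_nonneg_right hcase.le ENNReal.toReal_nonneg
      have m' : lb * (μ (Icc ρpInf ρmρpInf)).toReal
          = lb * (μ (Ico ρpInf ρpr₀)).toReal + lb * (μ (Icc ρpr₀ ρmρpInf)).toReal := by
        linear_combination lb * m
      linarith [iD]
  -- Step 3 : global decompositions
  have hIio : μ (Iio 0) = 0 :=
    le_antisymm (le_trans (measure_mono Iio_subset_Iic_self) hsupp.le) zero_le
  have hIci0meas : (μ (Ici 0 : Set ℝ)).toReal = 1 := by
    have : μ (Ici (0:ℝ)) = 1 := by
      rw [← Set.compl_Iio, measure_compl measurableSet_Iio (hfin _), hIio, measure_univ]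
      simp
    rw [this, ENNReal.toReal_one]
  have hIci0int : ∫ u in Ici (0:ℝ), u ∂μ = S₀ := by
    rw [← hmean, ← setIntegral_univ (f := fun x : ℝ => x) (μ := μ), ← Set.Iio_union_Ici,
      haddI _ _ (Set.Iio_disjoint_Ici le_rfl) measurableSet_Ici]
    have : ∫ u in Iio (0:ℝ), u ∂μ = 0 := by
      rw [Measure.restrict_eq_zero.mpr hIio]
      simp
    rw [this, zero_add]
  have d3 : Icc 0 r₀ ∪ Ioi r₀ = Ici (0:ℝ) := Icc_union_Ioi_eq_Ici hr₀0.le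
  have F1 : S₀ = lb * (μ (Icc 0 r₀)).toReal + ∫ u in Ioi r₀, u ∂μ := by
    rw [← hIci0int, ← d3, haddI _ _ (hdisj2 _ _) measurableSet_Ioi, iA]
  have F2 : (μ (Icc 0 r₀)).toReal + (μ (Ioi r₀)).toReal = 1 := by
    rw [← haddμ _ _ (hdisj2 _ _) measurableSet_Ioi, d3, hIci0meas]
  have d4 : Icc ρpr₀ r₀ ∪ Ioi r₀ = Ici ρpr₀ := Icc_union_Ioi_eq_Ici hρpr₀r₀
  have d5 : Ico ρpInf ρpr₀ ∪ Ici ρpr₀ = Ici ρpInf := Ico_union_Ici_eq_Ici step1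
  have F3 : ub * (μ (Ici ρpInf)).toReal
      = (∫ u in Ico ρpInf ρpr₀, u ∂μ) + ub * (μ (Icc ρpr₀ r₀)).toReal
        + ∫ u in Ioi r₀, u ∂μ := by
    rw [← iB, ← d5, haddI _ _ (hdisj1 _ _) measurableSet_Ici, ← d4,
      haddI _ _ (hdisj2 _ _) measurableSet_Ioi, iC, add_assoc]
  have F4 : (μ (Ici ρpInf)).toReal
      = (μ (Ico ρpInf ρpr₀)).toReal + (μ (Icc ρpr₀ r₀)).toReal + (μ (Ioi r₀)).toReal := by
    rw [← d5, haddμ _ _ (hdisj1 _ _) measurableSet_Ici, ← d4,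
      haddμ _ _ (hdisj2 _ _) measurableSet_Ioi, add_assoc]
  have F6 : (μ (Ioo ρpInf ρpr₀)).toReal ≤ (μ (Ico ρpInf ρpr₀)).toReal :=
    ENNReal.toReal_le_toReal (hfin _) (hfin _) |>.mpr
      (measure_mono Set.Ioo_subset_Ico_self)
  -- conclude
  have hsubpos : (0:ℝ) < ub - lb := by linarith
  have key : ((μ (Ioo ρpInf ρpr₀)).toReal + (μ (Ioi r₀)).toReal) * (ub - lb) ≤ S₀ - lb := by
    have P1 : ub * (μ (Ici ρpInf)).toReal
        = ub * (μ (Ico ρpInf ρpr₀)).toReal + ub * (μ (Icc ρpr₀ r₀)).toReal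
          + ub * (μ (Ioi r₀)).toReal := by linear_combination ub * F4
    have P2 : lb * (μ (Icc 0 r₀)).toReal = lb - lb * (μ (Ioi r₀)).toReal := by
      linear_combination lb * F2
    have P3 : (ub - lb) * (μ (Ioo ρpInf ρpr₀)).toReal
        ≤ (ub - lb) * (μ (Ico ρpInf ρpr₀)).toReal :=
      mul_le_mul_of_nonneg_left F6 hsubpos.le
    nlinarith [F1, F3, keyE, P1, P2, P3]
  have : (μ (Ioo ρpInf ρpr₀)).toReal + (μ (Ioi r₀)).toReal ≤ (S₀ - lb) / (ub - lb) :=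
    (le_div_iff₀ hsubpos).mpr key
  linarith
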